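/- Let a ∈ ℂ with a ≠ 0, and let r ∈ ℂ satisfy r² = a³/432. Then the set of (u,v,w) ∈ ℂ³ satisfying the system (S) with (a,b,c) = (a,0,0) together with the additional equation C₉(u,v,w) = r has exactly 27 elements (the degenerate case b = c = 0, a ≠ 0 gives exactly 27 normal forms, the vertices of a Hessian polyhedron). -/
import Mathlib


/-- The system (S): with ψ = u³+v³+w³, χ = u³v³+u³w³+v³w³, λ = 216u³v³w³,
the equations ψ² − 12χ = a, ψ⁴ + λψ = b, ψ⁶ − (5/2)λψ³ − (1/8)λ² = c. -/
def sysS (a b c u v w : ℂ) : Prop :=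
  (u ^ 3 + v ^ 3 + w ^ 3) ^ 2
      - 12 * (u ^ 3 * v ^ 3 + u ^ 3 * w ^ 3 + v ^ 3 * w ^ 3) = a ∧
    (u ^ 3 + v ^ 3 + w ^ 3) ^ 4
      + (216 * (u ^ 3 * v ^ 3 * w ^ 3)) * (u ^ 3 + v ^ 3 + w ^ 3) = b ∧
    (u ^ 3 + v ^ 3 + w ^ 3) ^ 6
      - (5 / 2) * (216 * (u ^ 3 * v ^ 3 * w ^ 3)) * (u ^ 3 + v ^ 3 + w ^ 3) ^ 3
      - (1 / 8) * (216 * (u ^ 3 * v ^ 3 * w ^ 3)) ^ 2 = c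

/-- C₉(u,v,w) = (u³−v³)(u³−w³)(v³−w³). -/
def C9 (u v w : ℂ) : ℂ := (u ^ 3 - v ^ 3) * (u ^ 3 - w ^ 3) * (v ^ 3 - w ^ 3)
lemma char_lemma (a r p : ℂ) (hr0 : r ≠ 0) (hp2 : p ^ 2 = a / 12)
    (hpa : p * a = -6 * r) (u v w : ℂ) :
    (sysS a 0 0 u v w ∧ C9 u v w = r) ↔
      ((u ^ 3 = p ∧ v ^ 3 = -p ∧ w ^ 3 = 0) ∨
       (u ^ 3 = -p ∧ v ^ 3 = 0 ∧ w ^ 3 = p) ∨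
       (u ^ 3 = 0 ∧ v ^ 3 = p ∧ w ^ 3 = -p)) := by
  constructor
  · rintro ⟨⟨h1, h2, h3⟩, h4⟩
    rw [C9] at h4
    -- step 1: ψ = 0
    have hψ : u ^ 3 + v ^ 3 + w ^ 3 = 0 := by
      have hfac : (u ^ 3 + v ^ 3 + w ^ 3) *
          ((u ^ 3 + v ^ 3 + w ^ 3) ^ 3 + 216 * (u ^ 3 * v ^ 3 * w ^ 3)) = 0 := by
        linear_combination h2
      rcases mul_eq_zero.1 hfac with h | h
      · exact h
      · have hL2 : (216 * (u ^ 3 * v ^ 3 * w ^ 3)) ^ 2 = 0 := by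
          linear_combination (8/27) * h3 -
            (8/27) * ((u ^ 3 + v ^ 3 + w ^ 3) ^ 3 - (7/2) * (216 * (u ^ 3 * v ^ 3 * w ^ 3))) * h
        have hL : 216 * (u ^ 3 * v ^ 3 * w ^ 3) = 0 := by
          exact pow_eq_zero_iff two_ne_zero |>.mp hL2
        have hc : (u ^ 3 + v ^ 3 + w ^ 3) ^ 3 = 0 := by linear_combination h - hL
        exact pow_eq_zero_iff three_ne_zero |>.mp hc
    -- step 2: product of cubes is 0
    have h0 : u ^ 3 * v ^ 3 * w ^ 3 = 0 := by
      have h2' : (u ^ 3 * v ^ 3 * w ^ 3) ^ 2 = 0 := by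
        linear_combination (-1/5832) * h3 +
          (1/5832) * ((u ^ 3 + v ^ 3 + w ^ 3) ^ 5 -
            (5/2) * (216 * (u ^ 3 * v ^ 3 * w ^ 3)) * (u ^ 3 + v ^ 3 + w ^ 3) ^ 2) * hψ
      exact pow_eq_zero_iff two_ne_zero |>.mp h2'
    have he2 : u ^ 3 * v ^ 3 + u ^ 3 * w ^ 3 + v ^ 3 * w ^ 3 = -(a / 12) := by
      linear_combination (-1/12) * h1 + (1/12) * (u ^ 3 + v ^ 3 + w ^ 3) * hψ
    rcases mul_eq_zero.1 h0 with huv | hw3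
    · rcases mul_eq_zero.1 huv with hu3 | hv3
      · -- u³ = 0 : third disjunct
        have hfac : (v ^ 3 - p) * (v ^ 3 + p) = 0 := by
          linear_combination v ^ 3 * hψ - he2 - hp2 + w ^ 3 * hu3
        rcases mul_eq_zero.1 hfac with h | h
        · have hvp : v ^ 3 = p := by linear_combination h
          refine Or.inr (Or.inr ⟨hu3, hvp, ?_⟩)
          linear_combination hψ - hu3 - hvp
        · have hvp : v ^ 3 = -p := by linear_combination h
          have hwp : w ^ 3 = p := by linear_combination hψ - hu3 - hvp
          have hC : (u ^ 3 - v ^ 3) * (u ^ 3 - w ^ 3) * (v ^ 3 - w ^ 3) = -r := by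
            rw [hu3, hvp, hwp]; linear_combination 2 * p * hp2 + (1/6) * hpa
          have : -r = r := hC.symm.trans h4
          exact absurd (by linear_combination (-1/2) * this : r = 0) hr0
      · -- v³ = 0 : second disjunct
        have hfac : (u ^ 3 - p) * (u ^ 3 + p) = 0 := by
          linear_combination u ^ 3 * hψ - he2 - hp2 + w ^ 3 * hv3
        rcases mul_eq_zero.1 hfac with h | h
        · have hup : u ^ 3 = p := by linear_combination h
          have hwp : w ^ 3 = -p := by linear_combination hψ - hv3 - hup
          have hC : (u ^ 3 - v ^ 3) * (u ^ 3 - w ^ 3) * (v ^ 3 - w ^ 3) = -r := by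
            rw [hup, hv3, hwp]; linear_combination 2 * p * hp2 + (1/6) * hpa
          have : -r = r := hC.symm.trans h4
          exact absurd (by linear_combination (-1/2) * this : r = 0) hr0
        · have hup : u ^ 3 = -p := by linear_combination h
          refine Or.inr (Or.inl ⟨hup, hv3, ?_⟩)
          linear_combination hψ - hv3 - hup
    · -- w³ = 0 : first disjunct
      have hfac : (u ^ 3 - p) * (u ^ 3 + p) = 0 := by
        linear_combination u ^ 3 * hψ - he2 - hp2 + v ^ 3 * hw3
      rcases mul_eq_zero.1 hfac with h | h
      · have hup : u ^ 3 = p := by linear_combination h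
        refine Or.inl ⟨hup, ?_, hw3⟩
        linear_combination hψ - hw3 - hup
      · have hup : u ^ 3 = -p := by linear_combination h
        have hvp : v ^ 3 = p := by linear_combination hψ - hw3 - hup
        have hC : (u ^ 3 - v ^ 3) * (u ^ 3 - w ^ 3) * (v ^ 3 - w ^ 3) = -r := by
          rw [hup, hvp, hw3]; linear_combination 2 * p * hp2 + (1/6) * hpa
        have : -r = r := hC.symm.trans h4
        exact absurd (by linear_combination (-1/2) * this : r = 0) hr0
  · rintro (⟨hu, hv, hw⟩ | ⟨hu, hv, hw⟩ | ⟨hu, hv, hw⟩) <;>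
      · simp only [sysS, C9]
        rw [hu, hv, hw]
        refine ⟨⟨by linear_combination 12 * hp2, by ring, by ring⟩,
          by linear_combination -2 * p * hp2 - (1/6) * hpa⟩

lemma count27 (p : ℂ) (hp0 : p ≠ 0) :
    {t : ℂ × ℂ × ℂ |
      (t.1 ^ 3 = p ∧ t.2.1 ^ 3 = -p ∧ t.2.2 ^ 3 = 0) ∨
      (t.1 ^ 3 = -p ∧ t.2.1 ^ 3 = 0 ∧ t.2.2 ^ 3 = p) ∨
      (t.1 ^ 3 = 0 ∧ t.2.1 ^ 3 = p ∧ t.2.2 ^ 3 = -p)}.ncard = 27 := by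
  obtain ⟨μ, hμ⟩ := IsAlgClosed.exists_pow_nat_eq p (n := 3) (by norm_num)
  have hμ0 : μ ≠ 0 := by
    intro h; rw [h] at hμ; simp at hμ; exact hp0 hμ.symm
  obtain ⟨ω, hω3, hω1⟩ : ∃ ω : ℂ, ω ^ 3 = 1 ∧ ω ≠ 1 := by
    have hprim := Complex.isPrimitiveRoot_exp 3 (by norm_num)
    exact ⟨_, hprim.pow_eq_one, hprim.ne_one (by norm_num)⟩
  have hω0 : ω ≠ 0 := by
    intro h; rw [h] at hω3; simp at hω3
  have hs : ω ^ 2 + ω + 1 = 0 := by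
    have h0 : (ω - 1) * (ω ^ 2 + ω + 1) = 0 := by linear_combination hω3
    rcases mul_eq_zero.1 h0 with h | h
    · exact absurd (by linear_combination h) hω1
    · exact h
  have hω2ne1 : ω ^ 2 ≠ 1 := fun h => hω1 (by linear_combination hω3 - ω * h)
  have hω2neω : ω ^ 2 ≠ ω := fun h => hω1 (by linear_combination hω3 - (ω + 1) * h)
  have hωinj : ∀ i j : Fin 3, ω ^ (i : ℕ) = ω ^ (j : ℕ) → i = j := by
    intro i j h
    fin_cases i <;> fin_cases j <;>
      simp only [Fin.mk_zero, Fin.mk_one, Fin.val_zero, Fin.val_one, pow_zero, pow_one,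
        Fin.isValue, show (((⟨2, by norm_num⟩ : Fin 3)) : ℕ) = 2 from rfl] at h ⊢ <;>
      first
        | rfl
        | exact absurd h hω1
        | exact absurd h.symm hω1
        | exact absurd h hω2ne1
        | exact absurd h.symm hω2ne1
        | exact absurd h hω2neω
        | exact absurd h.symm hω2neω
  have hroots : ∀ x c : ℂ, x ^ 3 = c ^ 3 → x = c ∨ x = ω * c ∨ x = ω ^ 2 * c := by
    intro x c h
    have h0 : (x - c) * (x - ω * c) * (x - ω ^ 2 * c) = 0 := by
      linear_combination h + (-c * x ^ 2 + ω * c ^ 2 * x - (ω - 1) * c ^ 3) * hs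
    rcases mul_eq_zero.1 h0 with h' | h'
    · rcases mul_eq_zero.1 h' with h'' | h''
      · exact Or.inl (by linear_combination h'')
      · exact Or.inr (Or.inl (by linear_combination h''))
    · exact Or.inr (Or.inr (by linear_combination h'))
  have hcube : ∀ i : Fin 3, (ω ^ (i : ℕ) * μ) ^ 3 = p := by
    intro i
    rw [mul_pow, ← pow_mul, mul_comm (i : ℕ) 3, pow_mul, hω3, one_pow, one_mul, hμ]
  have hcuben : ∀ i : Fin 3, (-(ω ^ (i : ℕ) * μ)) ^ 3 = -p := by
    intro i
    rw [show ∀ x : ℂ, (-x) ^ 3 = -(x ^ 3) from fun x => by ring, hcube]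
  have hnegμ : (-μ) ^ 3 = -p := by
    rw [show ∀ x : ℂ, (-x) ^ 3 = -(x ^ 3) from fun x => by ring, hμ]
  set f : Fin 3 × Fin 3 × Fin 3 → ℂ × ℂ × ℂ := fun x =>
    if x.1 = 0 then (ω ^ (x.2.1 : ℕ) * μ, -(ω ^ (x.2.2 : ℕ) * μ), 0)
    else if x.1 = 1 then (-(ω ^ (x.2.1 : ℕ) * μ), 0, ω ^ (x.2.2 : ℕ) * μ)
    else (0, ω ^ (x.2.1 : ℕ) * μ, -(ω ^ (x.2.2 : ℕ) * μ)) with hfdef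
  have hinj : Function.Injective f := by
    rintro ⟨k, i, j⟩ ⟨k', i', j'⟩ h
    fin_cases k <;> fin_cases k' <;> simp [hfdef, Prod.ext_iff, hω0, hμ0] at h
    all_goals
      obtain ⟨h1, h2⟩ := h
      obtain rfl := hωinj _ _ h1
      obtain rfl := hωinj _ _ h2
      rfl
  -- helper to pick a root index
  have hpick : ∀ x : ℂ, x ^ 3 = p → ∃ i : Fin 3, x = ω ^ (i : ℕ) * μ := by
    intro x hx
    rcases hroots x μ (by rw [hx, hμ]) with h | h | h
    · exact ⟨0, by simpa using h⟩
    · exact ⟨1, by simpa using h⟩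
    · exact ⟨2, by simpa using h⟩
  have hpickn : ∀ x : ℂ, x ^ 3 = -p → ∃ i : Fin 3, x = -(ω ^ (i : ℕ) * μ) := by
    intro x hx
    rcases hroots x (-μ) (by rw [hx, hnegμ]) with h | h | h
    · exact ⟨0, by rw [h]; simp⟩
    · exact ⟨1, by rw [h]; simp⟩
    · exact ⟨2, by rw [h]; simp⟩
  have hset : {t : ℂ × ℂ × ℂ |
      (t.1 ^ 3 = p ∧ t.2.1 ^ 3 = -p ∧ t.2.2 ^ 3 = 0) ∨
      (t.1 ^ 3 = -p ∧ t.2.1 ^ 3 = 0 ∧ t.2.2 ^ 3 = p) ∨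
      (t.1 ^ 3 = 0 ∧ t.2.1 ^ 3 = p ∧ t.2.2 ^ 3 = -p)} = Set.range f := by
    ext ⟨u, v, w⟩
    simp only [Set.mem_setOf_eq, Set.mem_range]
    constructor
    · rintro (⟨hu, hv, hw⟩ | ⟨hu, hv, hw⟩ | ⟨hu, hv, hw⟩)
      · obtain ⟨i, hi⟩ := hpick u hu
        obtain ⟨j, hj⟩ := hpickn v hv
        have hw0 : w = 0 := pow_eq_zero_iff three_ne_zero |>.mp hw
        exact ⟨(0, i, j), by simp [hfdef, hi, hj, hw0]⟩
      · obtain ⟨i, hi⟩ := hpickn u hu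
        obtain ⟨j, hj⟩ := hpick w hw
        have hv0 : v = 0 := pow_eq_zero_iff three_ne_zero |>.mp hv
        exact ⟨(1, i, j), by simp [hfdef, hi, hj, hv0]⟩
      · obtain ⟨i, hi⟩ := hpick v hv
        obtain ⟨j, hj⟩ := hpickn w hw
        have hu0 : u = 0 := pow_eq_zero_iff three_ne_zero |>.mp hu
        exact ⟨(2, i, j), by simp [hfdef, hi, hj, hu0]⟩
    · rintro ⟨⟨k, i, j⟩, hk⟩
      have h3 := hk
      fin_cases k <;> simp [hfdef, Prod.ext_iff] at h3 <;>
        obtain ⟨h1, h2, h3⟩ := h3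
      · exact Or.inl ⟨h1 ▸ hcube i, h2 ▸ hcuben j, by rw [← h3]; norm_num⟩
      · exact Or.inr (Or.inl ⟨h1 ▸ hcuben i, by rw [← h2]; norm_num, h3 ▸ hcube j⟩)
      · exact Or.inr (Or.inr ⟨by rw [← h1]; norm_num, h2 ▸ hcube i, h3 ▸ hcuben j⟩)
  rw [hset, ← Set.image_univ, Set.ncard_image_of_injective _ hinj, Set.ncard_univ]
  simp

/-- for a ≠ 0 and r with r² = a³/432, the system (S) with
(a,b,c) = (a,0,0) and C₉ = r has exactly 27 solutions. -/
theorem degenerate_case_has_27_solutions (a r : ℂ) (ha : a ≠ 0)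
    (hr : r ^ 2 = a ^ 3 / 432) :
    {t : ℂ × ℂ × ℂ | sysS a 0 0 t.1 t.2.1 t.2.2 ∧ C9 t.1 t.2.1 t.2.2 = r}.ncard
      = 27 := by
  have hr0 : r ≠ 0 := by
    intro h
    apply ha
    have h3 : a ^ 3 = 0 := by
      rw [h] at hr
      linear_combination -432 * hr
    exact pow_eq_zero_iff three_ne_zero |>.mp h3
  set p : ℂ := -6 * r / a with hpdef
  have hp0 : p ≠ 0 := div_ne_zero (mul_ne_zero (by norm_num) hr0) ha
  have hpa : p * a = -6 * r := by
    rw [hpdef]; field_simp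
  have hp2 : p ^ 2 = a / 12 := by
    rw [hpdef, div_pow, div_eq_div_iff (pow_ne_zero 2 ha) (by norm_num)]
    linear_combination 432 * hr
  have hsets : {t : ℂ × ℂ × ℂ | sysS a 0 0 t.1 t.2.1 t.2.2 ∧ C9 t.1 t.2.1 t.2.2 = r}
      = {t : ℂ × ℂ × ℂ |
        (t.1 ^ 3 = p ∧ t.2.1 ^ 3 = -p ∧ t.2.2 ^ 3 = 0) ∨
        (t.1 ^ 3 = -p ∧ t.2.1 ^ 3 = 0 ∧ t.2.2 ^ 3 = p) ∨
        (t.1 ^ 3 = 0 ∧ t.2.1 ^ 3 = p ∧ t.2.2 ^ 3 = -p)} := by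
    ext ⟨u, v, w⟩
    simp only [Set.mem_setOf_eq]
    exact char_lemma a r p hr0 hp2 hpa u v w
  rw [hsets]
  exact count27 p hp0
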